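/- For coprime positive integers p and q, as α → ∞, N_{p/q}(α) = α²/2 − ((√(p/q) + √(q/p) − √(1/(pq))·(1 − 2{α√(pq)}))/2)·α + O_{p,q}(1), where {x} denotes the fractional part of x. -/

import Mathlib

set_option maxHeartbeats 1000000

open Finset


lemma gauss_Icc : ∀ K : ℤ, 0 ≤ K → 2 * ∑ k ∈ Finset.Icc (1:ℤ) K, k = K * (K + 1) := by
  refine Int.le_induction ?_ ?_
  · simp
  · intro K hK ih
    have h : Finset.Icc (1:ℤ) (K+1) = insert (K+1) (Finset.Icc 1 K) := by
      ext x; simp only [Finset.mem_Icc, Finset.mem_insert]; omega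
    rw [h, Finset.sum_insert (by simp)]
    ring_nf
    ring_nf at ih
    omega

lemma gauss_Ico (q : ℤ) (hq : 0 < q) : 2 * ∑ r ∈ Finset.Ico (0:ℤ) q, r = q * (q - 1) := by
  have h : Finset.Ico (0:ℤ) q = insert 0 (Finset.Icc 1 (q-1)) := by
    ext x; simp only [Finset.mem_Ico, Finset.mem_Icc, Finset.mem_insert]; omega
  rw [h, Finset.sum_insert (by simp)]
  have := gauss_Icc (q-1) (by omega)
  ring_nf at this ⊢
  omega

lemma period_sum (p q n : ℤ) (hq : 0 < q) (hpq : IsCoprime p q) (a : ℤ) :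
    2 * ∑ k ∈ Finset.Ico a (a + q), (n - p * k) % q = q * (q - 1) := by
  set φ : ℤ → ℤ := fun k => (n - p * k) % q with hφ
  have hinj : ∀ x ∈ Finset.Ico a (a+q), ∀ y ∈ Finset.Ico a (a+q), φ x = φ y → x = y := by
    intro x hx y hy hxy
    simp only [Finset.mem_Ico] at hx hy
    have hmod : (n - p * x) % q = (n - p * y) % q := hxy
    have hdvd : q ∣ (n - p * y) - (n - p * x) := Int.ModEq.dvd hmod
    have hdvd2 : q ∣ p * (x - y) := by
      have : (n - p * y) - (n - p * x) = p * (x - y) := by ring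
      rwa [this] at hdvd
    have hdvd3 : q ∣ x - y := (hpq.symm).dvd_of_dvd_mul_left hdvd2
    have : x - y = 0 := Int.eq_zero_of_abs_lt_dvd hdvd3 (by rw [abs_lt]; omega)
    omega
  have himg : (Finset.Ico a (a+q)).image φ = Finset.Ico 0 q := by
    apply Finset.eq_of_subset_of_card_le
    · intro r hr
      simp only [Finset.mem_image] at hr
      obtain ⟨k, _, rfl⟩ := hr
      simp only [Finset.mem_Ico]
      exact ⟨Int.emod_nonneg _ (by omega), Int.emod_lt_of_pos _ hq⟩
    · rw [Finset.card_image_of_injOn hinj, Int.card_Ico, Int.card_Ico]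
      omega
  have : ∑ r ∈ Finset.Ico (0:ℤ) q, r = ∑ k ∈ Finset.Ico a (a+q), φ k := by
    rw [← himg, Finset.sum_image hinj]
  rw [← this]
  exact gauss_Ico q hq

lemma R_bound (p q n : ℤ) (hq : 0 < q) (hpq : IsCoprime p q) :
    ∀ K : ℤ, 0 ≤ K → |2 * (∑ k ∈ Finset.Icc 1 K, (n - p * k) % q) - K * (q - 1)| ≤ 2 * q * q := by
  suffices h : ∀ j : ℕ, ∀ K : ℤ, 0 ≤ K → K ≤ (j:ℤ) →
      |2 * (∑ k ∈ Finset.Icc 1 K, (n - p * k) % q) - K * (q - 1)| ≤ 2 * q * q by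
    intro K hK
    exact h K.toNat K hK (by omega)
  intro j
  induction j with
  | zero =>
    intro K hK hKj
    have : K = 0 := by omega
    subst this
    simp
    positivity
  | succ j ih =>
    intro K hK hKj
    by_cases hKq : K < q
    · -- direct bound
      have h1 : 0 ≤ ∑ k ∈ Finset.Icc 1 K, (n - p * k) % q :=
        Finset.sum_nonneg fun k _ => Int.emod_nonneg _ (by omega)
      have h2 : ∑ k ∈ Finset.Icc 1 K, (n - p * k) % q ≤ K * (q - 1) := by
        calc ∑ k ∈ Finset.Icc 1 K, (n - p * k) % q
            ≤ ∑ k ∈ Finset.Icc 1 K, (q - 1) :=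
              Finset.sum_le_sum fun k _ => by
                have := Int.emod_lt_of_pos (n - p * k) hq; omega
          _ = K * (q - 1) := by
              rw [Finset.sum_const, Int.card_Icc]
              have : ((K + 1 - 1).toNat : ℤ) = K := by omega
              rw [nsmul_eq_mul, this]
      rw [abs_le]
      constructor <;> nlinarith
    · -- split off a period
      push_neg at hKq
      have hsplit : ∑ k ∈ Finset.Ioc (0:ℤ) K, (n - p * k) % q
          = ∑ k ∈ Finset.Ioc (0:ℤ) (K - q), (n - p * k) % q
            + ∑ k ∈ Finset.Ioc (K - q) K, (n - p * k) % q := by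
        have hdisj : Disjoint (Finset.Ioc (0:ℤ) (K - q)) (Finset.Ioc (K - q) K) := by
          rw [Finset.disjoint_left]; intro x hx hx2
          simp only [Finset.mem_Ioc] at hx hx2; omega
        rw [← Finset.sum_union hdisj,
          Finset.Ioc_union_Ioc_eq_Ioc (show (0:ℤ) ≤ K - q by omega) (show K - q ≤ K by omega)]
      have hIcc : Finset.Icc (1:ℤ) K = Finset.Ioc (0:ℤ) K := by
        ext x; simp only [Finset.mem_Icc, Finset.mem_Ioc]; omega
      have hIcc2 : Finset.Icc (1:ℤ) (K - q) = Finset.Ioc (0:ℤ) (K - q) := by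
        ext x; simp only [Finset.mem_Icc, Finset.mem_Ioc]; omega
      have hper : Finset.Ioc (K - q) K = Finset.Ico (K - q + 1) (K - q + 1 + q) := by
        ext x; simp only [Finset.mem_Ico, Finset.mem_Ioc]; omega
      have hperiod := period_sum p q n hq hpq (K - q + 1)
      rw [← hper] at hperiod
      have haux1 : (0:ℤ) ≤ K - q := by omega
      have haux2 : K - q ≤ (j:ℤ) := by omega
      have ihK := ih (K - q) haux1 haux2
      rw [hIcc, hsplit, ← hIcc2]
      rw [abs_le] at ihK ⊢
      constructor <;> nlinarith

lemma S_approx (p q : ℤ) (hp : 0 < p) (hq : 0 < q) (hpq : IsCoprime p q) (n : ℤ) (hn : 0 ≤ n) :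
    |2 * p * q * (∑ k ∈ Finset.Icc 1 (n / p), (n - p * k) / q) - (n * n - (p + q - 1) * n)|
      ≤ p * p + p * (p + q) + 2 * p * q * q := by
  set K := n / p with hKdef
  set a := n % p with hadef
  have hK0 : 0 ≤ K := Int.ediv_nonneg hn hp.le
  have hna : n = p * K + a := by rw [hKdef, hadef]; linarith [Int.mul_ediv_add_emod n p]
  have ha0 : 0 ≤ a := Int.emod_nonneg n (by omega)
  have hap : a < p := Int.emod_lt_of_pos n hp
  set S := ∑ k ∈ Finset.Icc (1:ℤ) K, (n - p * k) / q with hSdef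
  set R := ∑ k ∈ Finset.Icc (1:ℤ) K, (n - p * k) % q with hRdef
  set G := ∑ k ∈ Finset.Icc (1:ℤ) K, k with hGdef
  have h1 : q * S + R = K * n - p * G := by
    rw [hSdef, hRdef, hGdef, Finset.mul_sum, ← Finset.sum_add_distrib]
    have : ∀ k ∈ Finset.Icc (1:ℤ) K, q * ((n - p * k) / q) + (n - p * k) % q = n - p * k := by
      intro k _; rw [Int.mul_ediv_add_emod]
    rw [Finset.sum_congr rfl this, Finset.sum_sub_distrib, Finset.sum_const, ← Finset.mul_sum,
      Int.card_Icc]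
    have hcast : ((K + 1 - 1).toNat : ℤ) = K := by omega
    rw [nsmul_eq_mul, hcast]
  have h2 : 2 * G = K * (K + 1) := gauss_Icc K hK0
  have h3 := R_bound p q n hq hpq K hK0
  have key : 2 * p * q * S - (n * n - (p + q - 1) * n)
      = a * (p + q - 1) - a * a - p * (2 * R - K * (q - 1)) := by
    linear_combination 2 * p * h1 - p * p * h2 + (p * K - a + p + q - 1 - n) * hna
  rw [key, abs_le]
  rw [abs_le] at h3
  constructor <;> nlinarith

lemma count_eq (p q n : ℤ) (hp : 0 < p) (hq : 0 < q) (hn : 0 ≤ n) :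
    (({P : ℤ × ℤ | 0 < P.1 ∧ 0 < P.2 ∧ q * P.2 + p * P.1 ≤ n}).ncard : ℤ)
      = ∑ k ∈ Finset.Icc 1 (n / p), (n - p * k) / q := by
  have hset : {P : ℤ × ℤ | 0 < P.1 ∧ 0 < P.2 ∧ q * P.2 + p * P.1 ≤ n}
      = ↑((Finset.Icc ((1:ℤ), (1:ℤ)) (n, n)).filter (fun P => q * P.2 + p * P.1 ≤ n)) := by
    ext P
    simp only [Set.mem_setOf_eq, Finset.coe_filter, Finset.mem_Icc, Prod.le_def,
      Set.mem_setOf_eq]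
    constructor
    · rintro ⟨h1, h2, h3⟩
      have hk : P.1 ≤ p * P.1 := le_mul_of_one_le_left h1.le hp
      have hm : P.2 ≤ q * P.2 := le_mul_of_one_le_left h2.le hq
      refine ⟨⟨⟨h1, h2⟩, ?_, ?_⟩, h3⟩ <;> nlinarith
    · rintro ⟨⟨⟨h1, h2⟩, _, _⟩, h3⟩
      exact ⟨h1, h2, h3⟩
  rw [hset, Set.ncard_coe_finset]
  have hprod : Finset.Icc ((1:ℤ), (1:ℤ)) (n, n) = Finset.Icc 1 n ×ˢ Finset.Icc 1 n :=
    (Finset.Icc_product_Icc 1 n 1 n).symm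
  rw [hprod, Finset.card_filter, Finset.sum_product]
  have hinner : ∀ k ∈ Finset.Icc (1:ℤ) n,
      (∑ m ∈ Finset.Icc (1:ℤ) n, if q * m + p * k ≤ n then (1:ℕ) else 0)
        = ((n - p * k) / q).toNat := by
    intro k hk
    rw [Finset.mem_Icc] at hk
    rw [← Finset.card_filter]
    have hfilt : (Finset.Icc (1:ℤ) n).filter (fun m => q * m + p * k ≤ n)
        = Finset.Icc 1 ((n - p * k) / q) := by
      ext m
      simp only [Finset.mem_filter, Finset.mem_Icc]
      constructor
      · rintro ⟨⟨hm1, _⟩, hm3⟩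
        refine ⟨hm1, (Int.le_ediv_iff_mul_le hq).mpr (by linarith)⟩
      · rintro ⟨hm1, hm2⟩
        have hqm : m * q ≤ n - p * k := (Int.le_ediv_iff_mul_le hq).mp hm2
        have hmq : m ≤ m * q := le_mul_of_one_le_right (by linarith) hq
        refine ⟨⟨hm1, by nlinarith⟩, by linarith⟩
    rw [hfilt, Int.card_Icc]
    congr 1
    omega
  rw [Finset.sum_congr rfl hinner]
  have hsub : Finset.Icc (1:ℤ) (n / p) ⊆ Finset.Icc 1 n := by
    exact Finset.Icc_subset_Icc le_rfl (Int.ediv_le_self p hn)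
  rw [← Finset.sum_subset hsub (fun k hk hk2 => ?_)]
  · push_cast
    apply Finset.sum_congr rfl
    intro k hk
    rw [Finset.mem_Icc] at hk
    have hpk : p * k ≤ n := by
      have := (Int.le_ediv_iff_mul_le hp).mp hk.2
      linarith
    exact Int.toNat_of_nonneg (Int.ediv_nonneg (by linarith) hq.le)
  · rw [Finset.mem_Icc] at hk hk2
    push_neg at hk2
    have hk3 : n / p + 1 ≤ k := hk2 hk.1
    have : ¬ (k * p ≤ n) := by
      intro hc
      have := (Int.le_ediv_iff_mul_le hp).mpr hc
      omega
    have hneg : n - p * k < 0 := by nlinarith [hk.1]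
    have := Int.ediv_neg_of_neg_of_pos hneg hq
    omega

/-- `N β α` is the number of positive lattice points `(k,m)` with `m ≤ α√β − kβ`. -/
noncomputable def N (β α : ℝ) : ℕ :=
  Set.ncard {p : ℤ × ℤ | 0 < p.1 ∧ 0 < p.2 ∧
    (p.2 : ℝ) ≤ α * Real.sqrt β - (p.1 : ℝ) * β}

theorem stmt_3 (p q : ℕ) (hp : 0 < p) (hq : 0 < q) (hpq : Nat.Coprime p q) :
    ∃ C : ℝ, ∀ α : ℝ, 1 ≤ α →
      |(N ((p : ℝ) / q) α : ℝ) - (α ^ 2 / 2 -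
        (Real.sqrt ((p : ℝ) / q) + Real.sqrt ((q : ℝ) / p) -
          Real.sqrt (1 / ((p : ℝ) * q)) *
            (1 - 2 * Int.fract (α * Real.sqrt ((p : ℝ) * q)))) / 2 * α)| ≤ C := by
  have hP : (0:ℝ) < p := by exact_mod_cast hp
  have hQ : (0:ℝ) < q := by exact_mod_cast hq
  have hP1 : (1:ℝ) ≤ p := by exact_mod_cast hp
  have hQ1 : (1:ℝ) ≤ q := by exact_mod_cast hq
  set s := Real.sqrt ((p:ℝ) * q) with hsdef
  have hPQ1 : (1:ℝ) ≤ (p:ℝ) * q := by nlinarith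
  have hs2 : s ^ 2 = (p:ℝ) * q := Real.sq_sqrt (by positivity)
  have hs1 : 1 ≤ s := by
    rw [show (1:ℝ) = Real.sqrt 1 by rw [Real.sqrt_one], hsdef]
    exact Real.sqrt_le_sqrt hPQ1
  have hs0 : (0:ℝ) < s := lt_of_lt_of_le zero_lt_one hs1
  have hsP : Real.sqrt ((p:ℝ) / q) = (p:ℝ) / s := by
    rw [eq_div_iff hs0.ne', hsdef, ← Real.sqrt_mul (by positivity),
      show ((p:ℝ)/q) * ((p:ℝ)*q) = (p:ℝ)^2 by field_simp]
    exact Real.sqrt_sq hP.le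
  have hsQ : Real.sqrt ((q:ℝ) / p) = (q:ℝ) / s := by
    rw [eq_div_iff hs0.ne', hsdef, ← Real.sqrt_mul (by positivity),
      show ((q:ℝ)/p) * ((p:ℝ)*q) = (q:ℝ)^2 by field_simp]
    exact Real.sqrt_sq hQ.le
  have hsI : Real.sqrt (1 / ((p:ℝ) * q)) = 1 / s := by
    rw [eq_div_iff hs0.ne', hsdef, ← Real.sqrt_mul (by positivity),
      show (1/((p:ℝ)*q)) * ((p:ℝ)*q) = 1 by field_simp]
    exact Real.sqrt_one
  have hcop : IsCoprime (p:ℤ) (q:ℤ) := by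
    rw [Int.isCoprime_iff_gcd_eq_one, Int.gcd_natCast_natCast]
    exact hpq
  have hpz : (0:ℤ) < (p:ℤ) := by exact_mod_cast hp
  have hqz : (0:ℤ) < (q:ℤ) := by exact_mod_cast hq
  refine ⟨(((p:ℝ)*p + p*(p+q) + 2*p*q*q) + 1 + p + q), ?_⟩
  intro α hα
  set f := Int.fract (α * s) with hfdef
  have hf0 : 0 ≤ f := Int.fract_nonneg _
  have hf1 : f < 1 := Int.fract_lt_one _
  set n : ℤ := ⌊α * s⌋ with hndef
  have hαs1 : 1 ≤ α * s := by nlinarith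
  have hn1 : (1:ℤ) ≤ n := by
    rw [hndef]
    exact Int.le_floor.mpr (by push_cast; exact hαs1)
  have hnf : (n:ℝ) = α * s - f := by
    rw [hndef, hfdef]
    exact (Int.self_sub_fract _).symm
  -- counting step
  have hNset : (N ((p:ℝ)/q) α : ℤ) = ∑ k ∈ Finset.Icc 1 (n / (p:ℤ)), (n - (p:ℤ) * k) / (q:ℤ) := by
    rw [show (N ((p:ℝ)/q) α)
        = ({P : ℤ × ℤ | 0 < P.1 ∧ 0 < P.2 ∧ (q:ℤ) * P.2 + (p:ℤ) * P.1 ≤ n}).ncard from ?_]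
    · exact count_eq _ _ _ hpz hqz (by omega)
    · unfold N
      congr 1
      ext P
      simp only [Set.mem_setOf_eq]
      refine and_congr_right fun h1 => and_congr_right fun h2 => ?_
      rw [hsP]
      have hPs : (p:ℝ)/s = s/(q:ℝ) := by
        rw [div_eq_div_iff hs0.ne' hQ.ne']
        nlinarith [hs2]
      rw [hPs, show α * (s/(q:ℝ)) - (P.1:ℝ) * ((p:ℝ)/(q:ℝ)) = (α*s - (P.1:ℝ)*(p:ℝ))/(q:ℝ) by
        field_simp]
      rw [le_div_iff₀ hQ]
      rw [hndef, Int.le_floor]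
      push_cast
      constructor <;> intro h <;> linarith
  have hSbound := S_approx (p:ℤ) (q:ℤ) hpz hqz hcop n (by omega)
  -- real bound
  set S : ℤ := ∑ k ∈ Finset.Icc 1 (n / (p:ℤ)), (n - (p:ℤ) * k) / (q:ℤ) with hSdef
  set X : ℤ := n * n - ((p:ℤ) + (q:ℤ) - 1) * n with hXdef
  have hb : |2*(p:ℝ)*q*(S:ℝ) - (X:ℝ)| ≤ (p:ℝ)*p + p*(p+q) + 2*p*q*q := by
    have : ((|2*(p:ℤ)*q*S - X| : ℤ) : ℝ) ≤ (((p:ℤ)*p + p*((p:ℤ)+q) + 2*(p:ℤ)*q*q : ℤ) : ℝ) := by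
      exact_mod_cast hSbound
    push_cast at this
    convert this using 2 <;> push_cast <;> ring
  set e : ℝ := 2*(p:ℝ)*q*(S:ℝ) - (X:ℝ) with hedef
  have hNS : ((N ((p:ℝ)/q) α : ℕ) : ℝ) = (S:ℝ) := by exact_mod_cast hNset
  set g : ℝ := f^2 + f*((p:ℝ)+q-1) with hgdef
  have hXid : (X:ℝ) = 2*s^2*(α^2/2 - (((p:ℝ)+q-1) + 2*f)/(2*s)*α) + g := by
    have hX' : (X:ℝ) = (α*s-f)*(α*s-f) - ((p:ℝ)+q-1)*(α*s-f) := by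
      rw [hXdef]; push_cast; rw [hnf]
    rw [hX', hgdef]
    field_simp
    ring
  have hEcoeff : Real.sqrt ((p:ℝ)/q) + Real.sqrt ((q:ℝ)/p)
      - Real.sqrt (1/((p:ℝ)*q)) * (1 - 2*f) = (((p:ℝ)+q-1) + 2*f)/s := by
    rw [hsP, hsQ, hsI]
    field_simp
    ring
  clear_value s f n S X e g
  rw [hEcoeff, hNS]
  have hSe : (S:ℝ) = ((X:ℝ) + e)/(2*(p:ℝ)*q) := by
    rw [hedef]; field_simp; ring
  have h2s2 : 2*(p:ℝ)*q = 2*s^2 := by rw [hs2]; ring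
  have hdiff : (S:ℝ) - (α^2/2 - (((p:ℝ)+q-1) + 2*f)/s/2*α) = (g + e)/(2*s^2) := by
    rw [hSe, h2s2, hXid]
    have : (2:ℝ)*s^2 ≠ 0 := by positivity
    field_simp
    ring
  rw [show α^2/2 - (((p:ℝ)+q-1) + 2*f)/s/2*α
      = α^2/2 - (((p:ℝ)+q-1) + 2*f)/(2*s)*α by ring] at hdiff
  rw [show ((((p:ℝ)+q-1) + 2*f)/s)/2*α = (((p:ℝ)+q-1) + 2*f)/(2*s)*α from by ring]
  rw [hdiff]
  have h1 : |(g+e)/(2*s^2)| ≤ |g + e| := by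
    rw [abs_div, abs_of_pos (show (0:ℝ) < 2*s^2 by positivity)]
    exact div_le_self (abs_nonneg _) (by nlinarith [hs1, sq_nonneg (s-1)])
  have h2 : |g + e| ≤ |g| + |e| := abs_add_le g e
  have h3 : |g| ≤ (p:ℝ) + q := by
    rw [hgdef, abs_le]
    constructor <;> nlinarith
  linarith
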